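/- Theorem 6.2 (first part): For an IFS {S_j}_{j=1}^N of contractive similitudes on ℝ^d, the graph (X, 𝓔_v ∪ 𝓔_s) with slanted edges is Gromov hyperbolic. -/

import Mathlib

open Metric Filter

namespace HypIFS

/-- Euclidean space `ℝ^d`. -/
abbrev Euc (d : ℕ) := EuclideanSpace ℝ (Fin d)

/-- The distance `dist(A, B)` between two subsets of a metric space. -/
noncomputable def setDist {E : Type*} [PseudoMetricSpace E] (A B : Set E) : ℝ :=
  sInf (Set.image2 dist A B)

variable {d N : ℕ}

/-- For a word `x = i₁⋯i_k`, the composition `S_x = S_{i₁} ∘ ⋯ ∘ S_{i_k}`. -/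
def sWord (S : Fin N → Euc d → Euc d) : List (Fin N) → Euc d → Euc d :=
  fun w => w.foldr (fun i f => S i ∘ f) id

/-- For a word `x = i₁⋯i_k`, the product `r_x = r_{i₁} ⋯ r_{i_k}` of contraction ratios. -/
def rWord (ρ : Fin N → ℝ) (w : List (Fin N)) : ℝ := (w.map ρ).prod

/-- The coding level `𝓙_n = {i₁⋯i_k : r_{i₁⋯i_k} ≤ rⁿ < r_{i₁⋯i_{k−1}}}`,
with `𝓙_0` consisting of the empty word. -/
def Jlevel (ρ : Fin N → ℝ) (r : ℝ) (n : ℕ) : Set (List (Fin N)) :=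
  if n = 0 then {([] : List (Fin N))}
  else {w | rWord ρ w ≤ r ^ n ∧ r ^ n < rWord ρ w.dropLast}

/-- The vertical (parent–child) edge relation: `x ∈ 𝓙_n` is the initial segment
of `y ∈ 𝓙_{n+1}`. -/
def EV (ρ : Fin N → ℝ) (r : ℝ) (x y : List (Fin N)) : Prop :=
  ∃ n : ℕ, x ∈ Jlevel ρ r n ∧ y ∈ Jlevel ρ r (n + 1) ∧ x <+: y

/-- The horizontal edge relation: `x ≠ y` in the same level `𝓙_n` with
`dist(K_x, K_y) ≤ κ rⁿ`. -/
def EH (S : Fin N → Euc d → Euc d) (ρ : Fin N → ℝ) (r κ : ℝ) (K : Set (Euc d))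
    (x y : List (Fin N)) : Prop :=
  ∃ n : ℕ, x ∈ Jlevel ρ r n ∧ y ∈ Jlevel ρ r n ∧ x ≠ y ∧
    setDist (sWord S x '' K) (sWord S y '' K) ≤ κ * r ^ n

/-- The augmented tree `(X, 𝓔)`, `𝓔 = 𝓔_v ∪ 𝓔_h`, as a graph on the word space
(words belonging to no level `𝓙_n` are isolated vertices). -/
def augIFS (S : Fin N → Euc d → Euc d) (ρ : Fin N → ℝ) (r κ : ℝ) (K : Set (Euc d)) :
    SimpleGraph (List (Fin N)) where
  Adj x y := (EV ρ r x y ∨ EV ρ r y x ∨ EH S ρ r κ K x y ∨ EH S ρ r κ K y x) ∧ x ≠ y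
  symm := by
    constructor
    rintro x y ⟨h1 | h2 | h3 | h4, hne⟩
    · exact ⟨Or.inr (Or.inl h1), hne.symm⟩
    · exact ⟨Or.inl h2, hne.symm⟩
    · exact ⟨Or.inr (Or.inr (Or.inr h3)), hne.symm⟩
    · exact ⟨Or.inr (Or.inr (Or.inl h4)), hne.symm⟩
  loopless := ⟨fun x h => h.2 rfl⟩

/-- A graph is of bounded degree if `sup_x deg(x) < ∞`. -/
def BddDeg {V : Type*} (G : SimpleGraph V) : Prop :=
  ∃ M : ℕ, ∀ x : V, {y | G.Adj x y}.Finite ∧ {y | G.Adj x y}.ncard ≤ M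

/-- The slanted edge set `𝓔_s`: levels differ by one, not a vertical edge, and
`dist(K_x, K_y) ≤ κ r^{min(|x|,|y|)}`. -/
def ES (S : Fin N → Euc d → Euc d) (ρ : Fin N → ℝ) (r κ : ℝ) (K : Set (Euc d))
    (x y : List (Fin N)) : Prop :=
  ∃ n : ℕ, ((x ∈ Jlevel ρ r n ∧ y ∈ Jlevel ρ r (n + 1)) ∨
            (y ∈ Jlevel ρ r n ∧ x ∈ Jlevel ρ r (n + 1))) ∧
    ¬ EV ρ r x y ∧ ¬ EV ρ r y x ∧
    setDist (sWord S x '' K) (sWord S y '' K) ≤ κ * r ^ n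

/-- The graph `(X, 𝓔_v ∪ 𝓔_s)` with slanted edges. -/
def slantIFS (S : Fin N → Euc d → Euc d) (ρ : Fin N → ℝ) (r κ : ℝ) (K : Set (Euc d)) :
    SimpleGraph (List (Fin N)) where
  Adj x y := (EV ρ r x y ∨ EV ρ r y x ∨ ES S ρ r κ K x y ∨ ES S ρ r κ K y x) ∧ x ≠ y
  symm := by
    constructor
    rintro x y ⟨h1 | h2 | h3 | h4, hne⟩
    · exact ⟨Or.inr (Or.inl h1), hne.symm⟩
    · exact ⟨Or.inl h2, hne.symm⟩
    · exact ⟨Or.inr (Or.inr (Or.inr h3)), hne.symm⟩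
    · exact ⟨Or.inr (Or.inr (Or.inl h4)), hne.symm⟩
  loopless := ⟨fun x h => h.2 rfl⟩

/-- The Gromov product `|x ∧ y| = ½(|x| + |y| − d(x,y))` with respect to a root `o`. -/
noncomputable def gprod {V : Type*} (G : SimpleGraph V) (o x y : V) : ℝ :=
  ((G.dist o x : ℝ) + (G.dist o y : ℝ) - (G.dist x y : ℝ)) / 2

/-- Gromov hyperbolicity of a graph with basepoint `o`. -/
def GromovHyperbolic {V : Type*} (G : SimpleGraph V) (o : V) : Prop :=
  ∃ δ : ℝ, 0 ≤ δ ∧ ∀ x y z : V,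
    min (gprod G o x z) (gprod G o z y) - δ ≤ gprod G o x y

/-- The graph `(X, 𝓔_v ∪ 𝓔_s)` restricted to the actual vertex set
`X = ⋃_n 𝓙_n`. -/
def slantV (S : Fin N → Euc d → Euc d) (ρ : Fin N → ℝ) (r κ : ℝ) (K : Set (Euc d)) :
    SimpleGraph {w : List (Fin N) // ∃ n : ℕ, w ∈ Jlevel ρ r n} where
  Adj x y := (slantIFS S ρ r κ K).Adj x.1 y.1
  symm := ⟨fun _ _ h => (slantIFS S ρ r κ K).adj_symm h⟩
  loopless := ⟨fun x h => (slantIFS S ρ r κ K).irrefl (v := x.1) h⟩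

/-! ### Auxiliary development for the proof -/

section SetDistLemmas

variable {E : Type*} [PseudoMetricSpace E] {A B C A' B' : Set E}

theorem setDist_nonneg : 0 ≤ setDist A B :=
  Real.sInf_nonneg (by rintro x ⟨a, ha, b, hb, rfl⟩; exact dist_nonneg)

theorem setDist_le_dist {a b : E} (ha : a ∈ A) (hb : b ∈ B) : setDist A B ≤ dist a b :=
  csInf_le ⟨0, by rintro x ⟨a', _, b', _, rfl⟩; exact dist_nonneg⟩
    (Set.mem_image2_of_mem ha hb)

theorem setDist_anti (hA : A.Nonempty) (hB : B.Nonempty) (hA' : A ⊆ A') (hB' : B ⊆ B') :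
    setDist A' B' ≤ setDist A B := by
  refine le_csInf (hA.image2 hB) ?_
  rintro x ⟨a, ha, b, hb, rfl⟩
  exact setDist_le_dist (hA' ha) (hB' hb)

theorem setDist_exists (hA : A.Nonempty) (hB : B.Nonempty) {ε : ℝ} (hε : 0 < ε) :
    ∃ a ∈ A, ∃ b ∈ B, dist a b < setDist A B + ε := by
  obtain ⟨x, hx, hlt⟩ := Real.lt_sInf_add_pos (hA.image2 hB) hε
  obtain ⟨a, ha, b, hb, rfl⟩ := hx
  exact ⟨a, ha, b, hb, hlt⟩

theorem setDist_triangle (hA : A.Nonempty) (hB : B.Nonempty) (hC : C.Nonempty)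
    (hBb : Bornology.IsBounded B) :
    setDist A C ≤ setDist A B + Metric.diam B + setDist B C := by
  refine le_of_forall_pos_le_add fun ε hε => ?_
  obtain ⟨a, ha, b, hb, hab⟩ := setDist_exists hA hB (half_pos hε)
  obtain ⟨b', hb', c, hc, hbc⟩ := setDist_exists hB hC (half_pos hε)
  calc setDist A C ≤ dist a c := setDist_le_dist ha hc
    _ ≤ dist a b + dist b b' + dist b' c := dist_triangle4 a b b' c
    _ ≤ (setDist A B + ε / 2) + Metric.diam B + (setDist B C + ε / 2) :=
        add_le_add (add_le_add hab.le (Metric.dist_le_diam_of_mem hBb hb hb')) hbc.le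
    _ = setDist A B + Metric.diam B + setDist B C + ε := by ring

theorem setDist_nonpos_of_mem {p : E} (hpA : p ∈ A) (hpB : p ∈ B) : setDist A B ≤ 0 := by
  simpa using setDist_le_dist hpA hpB

end SetDistLemmas

/-- All the data and hypotheses of the theorem, bundled. -/
structure Ctx (d N : ℕ) where
  S : Fin N → Euc d → Euc d
  ρ : Fin N → ℝ
  r : ℝ
  κ : ℝ
  K : Set (Euc d)
  hρ0 : ∀ j, 0 < ρ j
  hρ1 : ∀ j, ρ j < 1
  hsim : ∀ j a b, dist (S j a) (S j b) = ρ j * dist a b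
  hr : IsLeast (Set.range ρ) r
  hκ : 0 < κ
  hKc : IsCompact K
  hKne : K.Nonempty
  hKinv : K = ⋃ j, S j '' K

namespace Ctx

variable {d N : ℕ} (c : Ctx d N)

theorem r_pos : 0 < c.r := by
  obtain ⟨j, hj⟩ := c.hr.1
  exact hj ▸ c.hρ0 j

theorem r_lt_one : c.r < 1 := by
  obtain ⟨j, hj⟩ := c.hr.1
  exact hj ▸ c.hρ1 j

theorem r_le (j : Fin N) : c.r ≤ c.ρ j := c.hr.2 ⟨j, rfl⟩

theorem rpow_pos (n : ℕ) : 0 < c.r ^ n := pow_pos c.r_pos n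

theorem rWord_pos (w : List (Fin N)) : 0 < rWord c.ρ w :=
  List.prod_pos (by simp only [List.mem_map]; rintro a ⟨j, _, rfl⟩; exact c.hρ0 j)

theorem rWord_le_one (w : List (Fin N)) : rWord c.ρ w ≤ 1 := by
  induction w with
  | nil => simp [rWord]
  | cons j w ih =>
      have : rWord c.ρ (j :: w) = c.ρ j * rWord c.ρ w := by simp [rWord]
      rw [this]
      calc c.ρ j * rWord c.ρ w ≤ 1 * 1 :=
        mul_le_mul (c.hρ1 j).le ih (c.rWord_pos w).le zero_le_one
      _ = 1 := by ring

theorem rWord_append (u v : List (Fin N)) :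
    rWord c.ρ (u ++ v) = rWord c.ρ u * rWord c.ρ v := by
  simp [rWord]

theorem rWord_prefix (h : u <+: v) : rWord c.ρ v ≤ rWord c.ρ u := by
  obtain ⟨w, rfl⟩ := h
  rw [c.rWord_append]
  nth_rewrite 2 [← mul_one (rWord c.ρ u)]
  exact mul_le_mul_of_nonneg_left (c.rWord_le_one w) (c.rWord_pos u).le

theorem r_mul_dropLast_le {w : List (Fin N)} (hw : w ≠ []) :
    c.r * rWord c.ρ w.dropLast ≤ rWord c.ρ w := by
  conv_rhs => rw [← List.dropLast_append_getLast hw]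
  rw [c.rWord_append]
  have : rWord c.ρ [w.getLast hw] = c.ρ (w.getLast hw) := by simp [rWord]
  rw [this, mul_comm]
  exact mul_le_mul_of_nonneg_left (c.r_le _) (c.rWord_pos _).le

theorem sWord_foldr (u : List (Fin N)) (g : Euc d → Euc d) (a : Euc d) :
    List.foldr (fun i f => c.S i ∘ f) g u a = sWord c.S u (g a) := by
  induction u generalizing a with
  | nil => rfl
  | cons j u ih => simp only [List.foldr_cons, Function.comp_apply, ih]; rfl

theorem sWord_append (u v : List (Fin N)) (a : Euc d) :
    sWord c.S (u ++ v) a = sWord c.S u (sWord c.S v a) := by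
  show List.foldr _ id (u ++ v) a = _
  rw [List.foldr_append, c.sWord_foldr]
  rfl

theorem sWord_dist (w : List (Fin N)) (a b : Euc d) :
    dist (sWord c.S w a) (sWord c.S w b) = rWord c.ρ w * dist a b := by
  induction w with
  | nil => simp [sWord, rWord]
  | cons j w ih =>
      have h1 : ∀ x, sWord c.S (j :: w) x = c.S j (sWord c.S w x) := fun x => rfl
      have h2 : rWord c.ρ (j :: w) = c.ρ j * rWord c.ρ w := by simp [rWord]
      rw [h1, h1, h2, c.hsim, ih, mul_assoc]

theorem sWord_image_subset (w : List (Fin N)) : sWord c.S w '' c.K ⊆ c.K := by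
  induction w with
  | nil => simp [sWord]
  | cons j w ih =>
      have h1 : sWord c.S (j :: w) '' c.K = c.S j '' (sWord c.S w '' c.K) := by
        rw [← Set.image_comp]; rfl
      rw [h1]
      refine subset_trans (Set.image_mono ih) ?_
      rw [c.hKinv]
      exact Set.subset_iUnion_of_subset j (by rw [← c.hKinv])

theorem K_mono {u v : List (Fin N)} (h : u <+: v) :
    sWord c.S v '' c.K ⊆ sWord c.S u '' c.K := by
  obtain ⟨w, rfl⟩ := h
  have : sWord c.S (u ++ w) '' c.K = sWord c.S u '' (sWord c.S w '' c.K) := by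
    rw [← Set.image_comp]
    exact Set.image_congr fun a _ => c.sWord_append u w a
  rw [this]
  exact Set.image_mono (c.sWord_image_subset w)

theorem Kw_nonempty (w : List (Fin N)) : (sWord c.S w '' c.K).Nonempty :=
  c.hKne.image _

theorem Kw_bounded (w : List (Fin N)) : Bornology.IsBounded (sWord c.S w '' c.K) :=
  c.hKc.isBounded.subset (c.sWord_image_subset w)

/-- diameter of K -/
noncomputable def D : ℝ := Metric.diam c.K

theorem D_nonneg : 0 ≤ c.D := Metric.diam_nonneg

theorem diam_Kw_le (w : List (Fin N)) :
    Metric.diam (sWord c.S w '' c.K) ≤ rWord c.ρ w * c.D := by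
  refine Metric.diam_le_of_forall_dist_le
    (mul_nonneg (c.rWord_pos w).le c.D_nonneg) ?_
  rintro x ⟨a, ha, rfl⟩ y ⟨b, hb, rfl⟩
  rw [c.sWord_dist]
  exact mul_le_mul_of_nonneg_left
    (Metric.dist_le_diam_of_mem c.hKc.isBounded ha hb) (c.rWord_pos w).le

/-! ### Levels and ancestors -/

theorem mem_J_zero {w : List (Fin N)} : w ∈ Jlevel c.ρ c.r 0 ↔ w = [] := by
  simp [Jlevel]

theorem mem_J_pos {w : List (Fin N)} {n : ℕ} (hn : n ≠ 0) :
    w ∈ Jlevel c.ρ c.r n ↔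
      rWord c.ρ w ≤ c.r ^ n ∧ c.r ^ n < rWord c.ρ w.dropLast := by
  simp [Jlevel, hn, Set.mem_setOf_eq]

theorem rWord_nil : rWord c.ρ ([] : List (Fin N)) = 1 := by simp [rWord]

theorem rWord_le_of_mem {w : List (Fin N)} {n : ℕ} (h : w ∈ Jlevel c.ρ c.r n) :
    rWord c.ρ w ≤ c.r ^ n := by
  rcases Nat.eq_zero_or_pos n with rfl | hn
  · rw [c.mem_J_zero] at h; simp [h, c.rWord_nil]
  · exact ((c.mem_J_pos hn.ne').mp h).1

theorem ne_nil_of_mem_J_pos {w : List (Fin N)} {n : ℕ} (hn : n ≠ 0)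
    (h : w ∈ Jlevel c.ρ c.r n) : w ≠ [] := by
  rintro rfl
  have h1 := ((c.mem_J_pos hn).mp h).1
  rw [c.rWord_nil] at h1
  exact absurd h1 (not_le.mpr (pow_lt_one₀ c.r_pos.le c.r_lt_one hn))

theorem rpow_succ_lt_of_mem {w : List (Fin N)} {n : ℕ} (h : w ∈ Jlevel c.ρ c.r n) :
    c.r ^ (n + 1) < rWord c.ρ w := by
  rcases Nat.eq_zero_or_pos n with rfl | hn
  · rw [c.mem_J_zero] at h
    simp [h, c.rWord_nil, pow_one]
    exact c.r_lt_one
  · have hne := c.ne_nil_of_mem_J_pos hn.ne' h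
    have h2 := ((c.mem_J_pos hn.ne').mp h).2
    calc c.r ^ (n + 1) = c.r * c.r ^ n := by ring
    _ < c.r * rWord c.ρ w.dropLast := by
        exact mul_lt_mul_of_pos_left h2 c.r_pos
    _ ≤ rWord c.ρ w := c.r_mul_dropLast_le hne

theorem lev_unique {w : List (Fin N)} {m n : ℕ} (hm : w ∈ Jlevel c.ρ c.r m)
    (hn : w ∈ Jlevel c.ρ c.r n) : m = n := by
  by_contra hne
  have key : ∀ a b : ℕ, a < b → w ∈ Jlevel c.ρ c.r a → w ∈ Jlevel c.ρ c.r b → False := by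
    intro a b hab ha hb
    have h1 : c.r ^ (a + 1) < rWord c.ρ w := c.rpow_succ_lt_of_mem ha
    have h2 : rWord c.ρ w ≤ c.r ^ b := c.rWord_le_of_mem hb
    have h3 : c.r ^ (a + 1) < c.r ^ b := lt_of_lt_of_le h1 h2
    have := (pow_lt_pow_iff_right_of_lt_one₀ c.r_pos c.r_lt_one).mp h3
    omega
  rcases lt_or_gt_of_ne hne with h | h
  · exact key m n h hm hn
  · exact key n m h hn hm

theorem prefix_dropLast {u v : List (Fin N)} (h : u <+: v) (hne : u ≠ v) :
    u <+: v.dropLast := by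
  have hlen : u.length < v.length := by
    rcases lt_or_eq_of_le h.length_le with h' | h'
    · exact h'
    · exact absurd (h.eq_of_length h') hne
  rw [List.dropLast_eq_take]
  exact List.prefix_take_iff.mpr ⟨h, by omega⟩

theorem prefix_mem_unique {u u' w : List (Fin N)} {j : ℕ} (hu : u <+: w) (hu' : u' <+: w)
    (hj : u ∈ Jlevel c.ρ c.r j) (hj' : u' ∈ Jlevel c.ρ c.r j) : u = u' := by
  have key : ∀ a b : List (Fin N), a <+: b → a ∈ Jlevel c.ρ c.r j →
      b ∈ Jlevel c.ρ c.r j → a = b := by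
    intro a b hab ha hb
    by_contra hne
    rcases Nat.eq_zero_or_pos j with rfl | hjpos
    · rw [c.mem_J_zero] at ha hb; rw [ha, hb] at hne; exact hne rfl
    · have h1 : a <+: b.dropLast := prefix_dropLast hab hne
      have h2 : rWord c.ρ b.dropLast ≤ rWord c.ρ a := c.rWord_prefix h1
      have h3 : rWord c.ρ a ≤ c.r ^ j := c.rWord_le_of_mem ha
      have h4 : c.r ^ j < rWord c.ρ b.dropLast := ((c.mem_J_pos hjpos.ne').mp hb).2
      linarith
  rcases List.prefix_or_prefix_of_prefix hu hu' with h | h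
  · exact key u u' h hj hj'
  · exact (key u' u h hj' hj).symm

theorem dropLast_take {α : Type*} {l : List α} {i : ℕ} (h : i ≤ l.length) :
    (l.take i).dropLast = l.take (i - 1) := by
  rcases lt_or_eq_of_le h with h' | h'
  · exact List.dropLast_take h'
  · rw [h', List.take_length, List.dropLast_eq_take]

theorem exists_prefix_mem {w : List (Fin N)} {n j : ℕ} (hw : w ∈ Jlevel c.ρ c.r n)
    (hj : j ≤ n) : ∃ u, u <+: w ∧ u ∈ Jlevel c.ρ c.r j := by
  rcases Nat.eq_zero_or_pos j with rfl | hjpos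
  · exact ⟨[], List.nil_prefix, by simp [Jlevel]⟩
  · have hP : ∃ i, rWord c.ρ (w.take i) ≤ c.r ^ j := by
      refine ⟨w.length, ?_⟩
      rw [List.take_length]
      calc rWord c.ρ w ≤ c.r ^ n := c.rWord_le_of_mem hw
      _ ≤ c.r ^ j := pow_le_pow_of_le_one c.r_pos.le c.r_lt_one.le hj
    classical
    set i := Nat.find hP with hi
    have hspec : rWord c.ρ (w.take i) ≤ c.r ^ j := Nat.find_spec hP
    have hile : i ≤ w.length := by
      refine Nat.find_min' hP ?_
      rw [List.take_length]
      calc rWord c.ρ w ≤ c.r ^ n := c.rWord_le_of_mem hw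
      _ ≤ c.r ^ j := pow_le_pow_of_le_one c.r_pos.le c.r_lt_one.le hj
    have hipos : 0 < i := by
      rcases Nat.eq_zero_or_pos i with h0 | h; swap; exact h
      exfalso
      have := hspec
      rw [h0] at this
      simp only [List.take_zero] at this
      rw [c.rWord_nil] at this
      exact absurd this (not_le.mpr (pow_lt_one₀ c.r_pos.le c.r_lt_one hjpos.ne'))
    have hmin : ¬ rWord c.ρ (w.take (i - 1)) ≤ c.r ^ j := Nat.find_min hP (by omega)
    refine ⟨w.take i, List.take_prefix i w, ?_⟩
    rw [c.mem_J_pos hjpos.ne']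
    constructor
    · exact hspec
    · rw [dropLast_take hile]
      exact not_le.mp hmin

/-- The vertex set. -/
abbrev X := {w : List (Fin N) // ∃ n : ℕ, w ∈ Jlevel c.ρ c.r n}

/-- The graph. -/
noncomputable def G : SimpleGraph c.X := slantV c.S c.ρ c.r c.κ c.K

/-- The level of a vertex. -/
noncomputable def lev (x : c.X) : ℕ := x.2.choose

theorem lev_spec (x : c.X) : x.1 ∈ Jlevel c.ρ c.r (c.lev x) := x.2.choose_spec

theorem lev_eq {x : c.X} {n : ℕ} (h : x.1 ∈ Jlevel c.ρ c.r n) : c.lev x = n :=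
  c.lev_unique (c.lev_spec x) h

/-- The root. -/
def root : c.X := ⟨([] : List (Fin N)), 0, by simp [Jlevel]⟩

theorem lev_root : c.lev c.root = 0 := c.lev_eq (by simp [Jlevel, root])

theorem exists_anc (x : c.X) {j : ℕ} (hj : j ≤ c.lev x) :
    ∃ u, u <+: x.1 ∧ u ∈ Jlevel c.ρ c.r j :=
  c.exists_prefix_mem (c.lev_spec x) hj

/-- The ancestor of `x` at level `j` (junk value `x` if `j > lev x`). -/
noncomputable def anc (x : c.X) (j : ℕ) : c.X :=
  if h : j ≤ c.lev x then ⟨(c.exists_anc x h).choose, j, (c.exists_anc x h).choose_spec.2⟩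
  else x

theorem anc_prefix {x : c.X} {j : ℕ} (h : j ≤ c.lev x) : (c.anc x j).1 <+: x.1 := by
  rw [anc, dif_pos h]
  exact (c.exists_anc x h).choose_spec.1

theorem anc_mem {x : c.X} {j : ℕ} (h : j ≤ c.lev x) :
    (c.anc x j).1 ∈ Jlevel c.ρ c.r j := by
  rw [anc, dif_pos h]
  exact (c.exists_anc x h).choose_spec.2

theorem lev_anc {x : c.X} {j : ℕ} (h : j ≤ c.lev x) : c.lev (c.anc x j) = j :=
  c.lev_eq (c.anc_mem h)

theorem anc_eq_of {x : c.X} {u : List (Fin N)} {j : ℕ} (h : j ≤ c.lev x)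
    (hu : u <+: x.1) (huj : u ∈ Jlevel c.ρ c.r j) : (c.anc x j).1 = u :=
  c.prefix_mem_unique (c.anc_prefix h) hu (c.anc_mem h) huj

theorem anc_self (x : c.X) : c.anc x (c.lev x) = x :=
  Subtype.ext (c.anc_eq_of le_rfl (List.prefix_refl _) (c.lev_spec x))

theorem anc_root (x : c.X) : c.anc x 0 = c.root := by
  refine Subtype.ext ?_
  show (c.anc x 0).1 = []
  exact c.anc_eq_of (Nat.zero_le _) List.nil_prefix (by simp [Jlevel])

theorem anc_anc {x : c.X} {i j : ℕ} (hij : i ≤ j) (hj : j ≤ c.lev x) :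
    c.anc (c.anc x j) i = c.anc x i := by
  have hi : i ≤ c.lev (c.anc x j) := by rw [c.lev_anc hj]; exact hij
  refine Subtype.ext (c.prefix_mem_unique ?_ (c.anc_prefix (hij.trans hj)) (c.anc_mem hi)
    (c.anc_mem (hij.trans hj)))
  exact (c.anc_prefix hi).trans (c.anc_prefix hj)

theorem anc_prefix_anc {x : c.X} {i j : ℕ} (hij : i ≤ j) (hj : j ≤ c.lev x) :
    (c.anc x i).1 <+: (c.anc x j).1 := by
  rw [← c.anc_anc hij hj]
  exact c.anc_prefix (by rw [c.lev_anc hj]; exact hij)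

/-- The cell of a vertex. -/
noncomputable def Kv (x : c.X) : Set (Euc d) := sWord c.S x.1 '' c.K

theorem Kv_nonempty (x : c.X) : (c.Kv x).Nonempty := c.hKne.image _

theorem Kv_bounded (x : c.X) : Bornology.IsBounded (c.Kv x) := c.Kw_bounded x.1

theorem Kv_subset_anc {x : c.X} {j : ℕ} (h : j ≤ c.lev x) : c.Kv x ⊆ c.Kv (c.anc x j) :=
  c.K_mono (c.anc_prefix h)

theorem Kv_anc_subset {x : c.X} {i j : ℕ} (hij : i ≤ j) (hj : j ≤ c.lev x) :
    c.Kv (c.anc x j) ⊆ c.Kv (c.anc x i) :=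
  c.K_mono (c.anc_prefix_anc hij hj)

theorem diam_Kv_le (x : c.X) : Metric.diam (c.Kv x) ≤ c.D * c.r ^ (c.lev x) := by
  calc Metric.diam (c.Kv x) ≤ rWord c.ρ x.1 * c.D := c.diam_Kw_le x.1
  _ ≤ c.r ^ (c.lev x) * c.D :=
      mul_le_mul_of_nonneg_right (c.rWord_le_of_mem (c.lev_spec x)) c.D_nonneg
  _ = c.D * c.r ^ (c.lev x) := mul_comm _ _

/-! ### Graph basics: adjacency, levels, walks -/

theorem setDist_comm {E : Type*} [PseudoMetricSpace E] (A B : Set E) :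
    setDist A B = setDist B A := by
  unfold setDist
  rw [Set.image2_comm dist_comm]

theorem ne_of_lev_ne {x y : c.X} (h : c.lev x ≠ c.lev y) : x ≠ y := by
  rintro rfl; exact h rfl

theorem val_ne_of_lev_ne {x y : c.X} (h : c.lev x ≠ c.lev y) : x.1 ≠ y.1 := by
  intro hv
  exact h (c.lev_unique (c.lev_spec x) (hv ▸ c.lev_spec y))

theorem adj_spec {x y : c.X} (h : c.G.Adj x y) :
    ∃ n : ℕ, ((c.lev x = n ∧ c.lev y = n + 1) ∨ (c.lev y = n ∧ c.lev x = n + 1)) ∧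
      setDist (c.Kv x) (c.Kv y) ≤ c.κ * c.r ^ n := by
  obtain ⟨h, -⟩ : (EV c.ρ c.r x.1 y.1 ∨ EV c.ρ c.r y.1 x.1 ∨ ES c.S c.ρ c.r c.κ c.K x.1 y.1 ∨ ES c.S c.ρ c.r c.κ c.K y.1 x.1) ∧ x.1 ≠ y.1 := h
  have hκr : ∀ n : ℕ, (0:ℝ) ≤ c.κ * c.r ^ n := fun n =>
    mul_nonneg c.hκ.le (c.rpow_pos n).le
  rcases h with h | h | h | h
  · obtain ⟨n, hx, hy, hpre⟩ := h
    refine ⟨n, Or.inl ⟨c.lev_eq hx, c.lev_eq hy⟩, ?_⟩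
    obtain ⟨p, hp⟩ := c.Kv_nonempty y
    exact le_trans (setDist_nonpos_of_mem (c.K_mono hpre hp) hp) (hκr n)
  · obtain ⟨n, hy, hx, hpre⟩ := h
    refine ⟨n, Or.inr ⟨c.lev_eq hy, c.lev_eq hx⟩, ?_⟩
    obtain ⟨p, hp⟩ := c.Kv_nonempty x
    exact le_trans (setDist_nonpos_of_mem hp (c.K_mono hpre hp)) (hκr n)
  · obtain ⟨n, hmem, -, -, hd⟩ := h
    rcases hmem with ⟨hx, hy⟩ | ⟨hy, hx⟩
    · exact ⟨n, Or.inl ⟨c.lev_eq hx, c.lev_eq hy⟩, hd⟩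
    · exact ⟨n, Or.inr ⟨c.lev_eq hy, c.lev_eq hx⟩, hd⟩
  · obtain ⟨n, hmem, -, -, hd⟩ := h
    rw [setDist_comm] at hd
    rcases hmem with ⟨hy, hx⟩ | ⟨hx, hy⟩
    · exact ⟨n, Or.inr ⟨c.lev_eq hy, c.lev_eq hx⟩, hd⟩
    · exact ⟨n, Or.inl ⟨c.lev_eq hx, c.lev_eq hy⟩, hd⟩

theorem adj_lev {x y : c.X} (h : c.G.Adj x y) :
    c.lev x = c.lev y + 1 ∨ c.lev y = c.lev x + 1 := by
  obtain ⟨n, hn, -⟩ := c.adj_spec h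
  rcases hn with ⟨h1, h2⟩ | ⟨h1, h2⟩
  · right; omega
  · left; omega

theorem adj_setDist {x y : c.X} (h : c.G.Adj x y) :
    setDist (c.Kv x) (c.Kv y) ≤ c.κ * c.r ^ (min (c.lev x) (c.lev y)) := by
  obtain ⟨n, hn, hd⟩ := c.adj_spec h
  have : min (c.lev x) (c.lev y) = n := by omega
  rw [this]; exact hd

theorem adj_of_levels {x y : c.X} (hxy : c.lev y = c.lev x + 1)
    (hd : setDist (c.Kv x) (c.Kv y) ≤ c.κ * c.r ^ (c.lev x)) : c.G.Adj x y := by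
  have hne : x.1 ≠ y.1 := c.val_ne_of_lev_ne (by omega)
  have hx : x.1 ∈ Jlevel c.ρ c.r (c.lev x) := c.lev_spec x
  have hy : y.1 ∈ Jlevel c.ρ c.r (c.lev x + 1) := hxy ▸ c.lev_spec y
  refine (⟨?_, hne⟩ : (EV c.ρ c.r x.1 y.1 ∨ EV c.ρ c.r y.1 x.1 ∨ ES c.S c.ρ c.r c.κ c.K x.1 y.1 ∨ ES c.S c.ρ c.r c.κ c.K y.1 x.1) ∧ x.1 ≠ y.1)
  by_cases hEV : EV c.ρ c.r x.1 y.1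
  · exact Or.inl hEV
  · refine Or.inr (Or.inr (Or.inl ⟨c.lev x, Or.inl ⟨hx, hy⟩, hEV, ?_, hd⟩))
    rintro ⟨m, hym, hxm, -⟩
    have h1 := c.lev_unique hym (hxy ▸ c.lev_spec y)
    have h2 := c.lev_unique hxm (c.lev_spec x)
    omega

theorem adj_parent {x : c.X} {n : ℕ} (h : c.lev x = n + 1) : c.G.Adj x (c.anc x n) := by
  have hn : n ≤ c.lev x := by omega
  have hEV : EV c.ρ c.r (c.anc x n).1 x.1 :=
    ⟨n, c.anc_mem hn, h ▸ c.lev_spec x, c.anc_prefix hn⟩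
  have hne : x.1 ≠ (c.anc x n).1 := c.val_ne_of_lev_ne (by rw [c.lev_anc hn]; omega)
  exact (⟨Or.inr (Or.inl hEV), hne⟩ : (EV c.ρ c.r x.1 (c.anc x n).1 ∨ EV c.ρ c.r (c.anc x n).1 x.1 ∨ ES c.S c.ρ c.r c.κ c.K x.1 (c.anc x n).1 ∨ ES c.S c.ρ c.r c.κ c.K (c.anc x n).1 x.1) ∧ x.1 ≠ (c.anc x n).1)

theorem walk_to_anc : ∀ (k : ℕ) (x : c.X) (j : ℕ), j ≤ c.lev x → c.lev x - j = k →
    ∃ p : c.G.Walk x (c.anc x j), p.length = k := by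
  intro k
  induction k with
  | zero =>
      intro x j hj hk
      have hjx : j = c.lev x := by omega
      have he : c.anc x j = x := by rw [hjx]; exact c.anc_self x
      exact ⟨(SimpleGraph.Walk.nil : c.G.Walk x x).copy rfl he.symm, by simp⟩
  | succ k ih =>
      intro x j hj hk
      have hx1 : c.lev x = (c.lev x - 1) + 1 := by omega
      set y := c.anc x (c.lev x - 1) with hy
      have hadj : c.G.Adj x y := c.adj_parent hx1
      have hlevy : c.lev y = c.lev x - 1 := c.lev_anc (by omega)
      have hjy : j ≤ c.lev y := by omega
      obtain ⟨q, hq⟩ := ih y j hjy (by omega)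
      have hay : c.anc y j = c.anc x j := c.anc_anc (by omega) (by omega)
      exact ⟨SimpleGraph.Walk.cons hadj (q.copy rfl hay), by simp [hq]⟩

theorem reachable_root (x : c.X) : c.G.Reachable x c.root := by
  obtain ⟨p, -⟩ := c.walk_to_anc (c.lev x) x 0 (Nat.zero_le _) (by omega)
  exact ⟨p.copy rfl (c.anc_root x)⟩

theorem connected : c.G.Connected := by
  rw [SimpleGraph.connected_iff]
  exact ⟨fun x y => (c.reachable_root x).trans (c.reachable_root y).symm,
    ⟨c.root⟩⟩

theorem lev_walk_bound {u v : c.X} (p : c.G.Walk u v) :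
    c.lev u ≤ c.lev v + p.length ∧ c.lev v ≤ c.lev u + p.length := by
  induction p with
  | nil => simp
  | cons h q ih =>
      have := c.adj_lev h
      simp only [SimpleGraph.Walk.length_cons]
      omega

theorem dist_root (x : c.X) : c.G.dist c.root x = c.lev x := by
  obtain ⟨p, hp⟩ := c.walk_to_anc (c.lev x) x 0 (Nat.zero_le _) (by omega)
  have h1 : c.G.dist c.root x ≤ c.lev x := by
    have := SimpleGraph.dist_le ((p.copy rfl (c.anc_root x)).reverse)
    simpa [hp] using this
  have h2 : c.lev x ≤ c.G.dist c.root x := by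
    obtain ⟨q, hq⟩ := (c.reachable_root x).symm.exists_walk_length_eq_dist
    have := (c.lev_walk_bound q).2
    rw [hq] at this
    have hr := c.lev_root
    omega
  omega

theorem walk_getVert {u v : c.X} (p : c.G.Walk u v) (a : ℕ) :
    ∀ b, a ≤ b → b ≤ p.length →
      ∃ q : c.G.Walk (p.getVert a) (p.getVert b), q.length = b - a := by
  intro b
  induction b with
  | zero =>
      intro hab _
      have : a = 0 := by omega
      subst this
      exact ⟨SimpleGraph.Walk.nil, by simp⟩
  | succ b ih =>
      intro hab hb
      rcases Nat.lt_or_ge a (b + 1) with h | h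
      · have hab' : a ≤ b := by omega
        obtain ⟨q, hq⟩ := ih hab' (by omega)
        exact ⟨q.concat (p.adj_getVert_succ (by omega)), by
          simp [SimpleGraph.Walk.length_concat, hq]; omega⟩
      · have : a = b + 1 := by omega
        subst this
        exact ⟨SimpleGraph.Walk.nil, by simp⟩

theorem dist_getVert_le {u v : c.X} (p : c.G.Walk u v) {a b : ℕ} (hab : a ≤ b)
    (hb : b ≤ p.length) : c.G.dist (p.getVert a) (p.getVert b) ≤ b - a := by
  obtain ⟨q, hq⟩ := c.walk_getVert p a b hab hb
  exact hq ▸ SimpleGraph.dist_le q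

theorem geodesic_dist_getVert {x y : c.X} (p : c.G.Walk x y) (hp : p.length = c.G.dist x y)
    {a b : ℕ} (hab : a ≤ b) (hb : b ≤ p.length) :
    b - a ≤ c.G.dist (p.getVert a) (p.getVert b) := by
  have h1 : c.G.dist x (p.getVert a) ≤ a := by
    have := c.dist_getVert_le p (Nat.zero_le a) (le_trans hab hb)
    simpa using this
  have h2 : c.G.dist (p.getVert b) y ≤ p.length - b := by
    have := c.dist_getVert_le p hb le_rfl
    simpa [p.getVert_length] using this
  have h3 := c.connected.dist_triangle (u := x) (v := p.getVert a) (w := p.getVert b)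
  have h4 := c.connected.dist_triangle (u := x) (v := p.getVert b) (w := y)
  omega

theorem lev_getVert_bound {u v : c.X} (p : c.G.Walk u v) {a b : ℕ} (hab : a ≤ b)
    (hb : b ≤ p.length) :
    c.lev (p.getVert a) ≤ c.lev (p.getVert b) + (b - a) ∧
    c.lev (p.getVert b) ≤ c.lev (p.getVert a) + (b - a) := by
  obtain ⟨q, hq⟩ := c.walk_getVert p a b hab hb
  have := c.lev_walk_bound q
  omega

/-! ### Constants and the confluence function -/

/-- `q = 1/r`. -/
noncomputable def q : ℝ := c.r⁻¹

theorem q_gt_one : 1 < c.q := (one_lt_inv₀ c.r_pos).mpr c.r_lt_one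

theorem q_pos : 0 < c.q := lt_trans one_pos c.q_gt_one

theorem rpow_mul_qpow (n : ℕ) : c.r ^ n * c.q ^ n = 1 := by
  rw [q, ← mul_pow, mul_inv_cancel₀ (ne_of_gt c.r_pos), one_pow]

/-- quadratic growth constant -/
noncomputable def c₀ : ℝ := (min (c.q - 1) 1) ^ 2 / 4

theorem c₀_pos : 0 < c.c₀ := by
  have h1 : 0 < min (c.q - 1) 1 := lt_min (by linarith [c.q_gt_one]) one_pos
  have := pow_pos h1 2
  unfold c₀; linarith

theorem quad_le_pow (n : ℕ) : c.c₀ * (n : ℝ) ^ 2 ≤ c.q ^ n := by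
  set ε := min (c.q - 1) 1 with hε
  have hε0 : 0 < ε := lt_min (by linarith [c.q_gt_one]) one_pos
  have hε1 : ε ≤ 1 := min_le_right _ _
  have hεq : 1 + ε ≤ c.q := by
    have : ε ≤ c.q - 1 := min_le_left _ _
    linarith
  have h1 : (1 + ε) ^ n ≤ c.q ^ n :=
    pow_le_pow_left₀ (by linarith) hεq n
  have hm : (1 + ε) ^ (n / 2) * (1 + ε) ^ (n / 2) ≤ (1 + ε) ^ n := by
    rw [← pow_add]
    exact pow_le_pow_right₀ (by linarith) (by omega)
  have hb : 1 + (↑(n / 2) : ℝ) * ε ≤ (1 + ε) ^ (n / 2) :=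
    one_add_mul_le_pow (by linarith) (n / 2)
  have hc : ε * (n : ℝ) / 2 ≤ 1 + (↑(n / 2) : ℝ) * ε := by
    have h2 : ((n : ℝ) - 1) / 2 ≤ (↑(n / 2) : ℝ) := by
      have : (2 * (n / 2) + 1 : ℕ) ≥ n := by omega
      have h3 : (n : ℝ) ≤ 2 * (↑(n / 2) : ℝ) + 1 := by exact_mod_cast this
      linarith
    have h4 : ε * ((n : ℝ) - 1) / 2 ≤ (↑(n / 2) : ℝ) * ε := by
      calc ε * ((n : ℝ) - 1) / 2 = (((n:ℝ) - 1)/2) * ε := by ring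
      _ ≤ (↑(n / 2) : ℝ) * ε := mul_le_mul_of_nonneg_right h2 hε0.le
    nlinarith
  have hc0 : 0 ≤ ε * (n : ℝ) / 2 := by positivity
  have hfin : (ε * (n : ℝ) / 2) ^ 2 ≤ (1 + ε) ^ n := by
    calc (ε * (n : ℝ) / 2) ^ 2 ≤ (1 + (↑(n / 2) : ℝ) * ε) ^ 2 := by
          apply pow_le_pow_left₀ hc0 hc
    _ = (1 + (↑(n / 2) : ℝ) * ε) * (1 + (↑(n / 2) : ℝ) * ε) := sq _
    _ ≤ (1 + ε) ^ (n / 2) * (1 + ε) ^ (n / 2) := by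
          have h5 : (0:ℝ) ≤ 1 + (↑(n / 2) : ℝ) * ε := by positivity
          exact mul_le_mul hb hb h5 (by positivity)
    _ ≤ (1 + ε) ^ n := hm
  calc c.c₀ * (n : ℝ) ^ 2 = (ε * (n : ℝ) / 2) ^ 2 := by unfold c₀; rw [← hε]; ring
  _ ≤ (1 + ε) ^ n := hfin
  _ ≤ c.q ^ n := h1

/-- `A = (κ + D)/κ ≥ 1`. -/
noncomputable def A : ℝ := (c.κ + c.D) / c.κ

theorem A_ge_one : 1 ≤ c.A := by
  rw [A, le_div_iff₀ c.hκ]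
  linarith [c.D_nonneg]

theorem A_pos : 0 < c.A := lt_of_lt_of_le one_pos c.A_ge_one

/-- oscillation constant -/
noncomputable def s₁ : ℕ := ⌈8 * c.A / c.c₀⌉₊

/-- per-level edge-count constant -/
noncomputable def C₄ : ℕ := 2 * c.s₁ + 4

/-- geometric series constant -/
noncomputable def C₅ : ℝ := 4 * (c.r / (1 - c.r) ^ 2) + (c.C₄ : ℝ) * (1 - c.r)⁻¹

theorem C₅_nonneg : 0 ≤ c.C₅ := by
  have h1 : 0 < 1 - c.r := by linarith [c.r_lt_one]
  have := c.r_pos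
  have h2 : (0:ℝ) ≤ (c.C₄ : ℝ) := Nat.cast_nonneg _
  have h3 : 0 < (1 - c.r) ^ 2 := pow_pos h1 2
  unfold C₅
  positivity

/-- the closeness constant for the confluence function -/
noncomputable def β : ℝ := (c.κ + c.D) * c.C₅ + c.κ

theorem β_pos : 0 < c.β := by
  have h1 : (0:ℝ) ≤ (c.κ + c.D) * c.C₅ :=
    mul_nonneg (by linarith [c.hκ, c.D_nonneg]) c.C₅_nonneg
  unfold β; linarith [c.hκ]

theorem κD_C₅_le_β : (c.κ + c.D) * c.C₅ ≤ c.β := by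
  unfold β; linarith [c.hκ]

theorem exists_t : ∃ n : ℕ, 1 ≤ n ∧ c.β * c.r ^ n ≤ c.κ := by
  obtain ⟨n, hn⟩ := exists_pow_lt_of_lt_one (div_pos c.hκ c.β_pos) c.r_lt_one
  refine ⟨n + 1, by omega, ?_⟩
  have h1 : c.r ^ (n + 1) ≤ c.r ^ n := pow_le_pow_of_le_one c.r_pos.le c.r_lt_one.le (by omega)
  have h2 : c.r ^ (n + 1) < c.κ / c.β := lt_of_le_of_lt h1 hn
  rw [lt_div_iff₀ c.β_pos] at h2
  linarith

/-- the vertical gap constant -/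
noncomputable def t : ℕ := c.exists_t.choose

theorem t_ge_one : 1 ≤ c.t := c.exists_t.choose_spec.1

theorem t_spec : c.β * c.r ^ c.t ≤ c.κ := c.exists_t.choose_spec.2

theorem exists_s₂ : ∃ n : ℕ, (2 * c.β + c.D) * c.r ^ n ≤ c.β := by
  have hpos : (0:ℝ) < 2 * c.β + c.D := by linarith [c.β_pos, c.D_nonneg]
  obtain ⟨n, hn⟩ := exists_pow_lt_of_lt_one (div_pos c.β_pos hpos) c.r_lt_one
  refine ⟨n, ?_⟩
  rw [lt_div_iff₀ hpos] at hn
  linarith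

/-- the ultrametric defect constant -/
noncomputable def s₂ : ℕ := c.exists_s₂.choose

theorem s₂_spec : (2 * c.β + c.D) * c.r ^ c.s₂ ≤ c.β := c.exists_s₂.choose_spec

/-- The confluence level of two vertices. -/
noncomputable def hfun (x y : c.X) : ℕ :=
  @Nat.findGreatest
    (fun j => setDist (c.Kv (c.anc x j)) (c.Kv (c.anc y j)) ≤ c.β * c.r ^ j)
    (Classical.decPred _)
    (min (c.lev x) (c.lev y))

theorem hfun_le (x y : c.X) : c.hfun x y ≤ min (c.lev x) (c.lev y) := by
  unfold hfun
  exact @Nat.findGreatest_le _ (Classical.decPred _) _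

theorem Kv_root : c.Kv c.root = c.K := by
  show sWord c.S [] '' c.K = c.K
  simp [sWord]

theorem hfun_spec (x y : c.X) :
    setDist (c.Kv (c.anc x (c.hfun x y))) (c.Kv (c.anc y (c.hfun x y)))
      ≤ c.β * c.r ^ (c.hfun x y) := by
  unfold hfun
  refine @Nat.findGreatest_spec 0
    (fun j => setDist (c.Kv (c.anc x j)) (c.Kv (c.anc y j)) ≤ c.β * c.r ^ j)
    (Classical.decPred _) (min (c.lev x) (c.lev y)) (Nat.zero_le _) ?_
  show setDist (c.Kv (c.anc x 0)) (c.Kv (c.anc y 0)) ≤ c.β * c.r ^ 0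
  rw [c.anc_root, c.anc_root, c.Kv_root]
  obtain ⟨p, hp⟩ := c.hKne
  calc setDist c.K c.K ≤ 0 := setDist_nonpos_of_mem hp hp
  _ ≤ c.β * c.r ^ 0 := by simpa using c.β_pos.le

theorem hfun_ge {x y : c.X} {j : ℕ} (hj : j ≤ min (c.lev x) (c.lev y))
    (hd : setDist (c.Kv (c.anc x j)) (c.Kv (c.anc y j)) ≤ c.β * c.r ^ j) :
    j ≤ c.hfun x y := by
  unfold hfun
  exact Nat.le_findGreatest hj hd

theorem hfun_self (x : c.X) : c.hfun x x = c.lev x := by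
  have h1 : c.hfun x x ≤ c.lev x := le_trans (c.hfun_le x x) (min_le_left _ _)
  have h2 : c.lev x ≤ c.hfun x x := by
    refine c.hfun_ge (by simp) ?_
    obtain ⟨p, hp⟩ := c.Kv_nonempty (c.anc x (c.lev x))
    calc setDist _ _ ≤ 0 := setDist_nonpos_of_mem hp hp
    _ ≤ c.β * c.r ^ c.lev x := mul_nonneg c.β_pos.le (c.rpow_pos _).le
  omega

/-- The ultrametric-type inequality for the confluence function. -/
theorem hfun_ultra (x y z : c.X) :
    min (c.hfun x z) (c.hfun z y) ≤ c.hfun x y + c.s₂ := by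
  set p := min (c.hfun x z) (c.hfun z y) with hp
  rcases Nat.lt_or_ge p c.s₂ with h | h
  · omega
  set j := p - c.s₂ with hj
  have hxz : c.hfun x z ≤ min (c.lev x) (c.lev z) := c.hfun_le x z
  have hzy : c.hfun z y ≤ min (c.lev z) (c.lev y) := c.hfun_le z y
  have hpx : p ≤ c.lev x := by omega
  have hpy : p ≤ c.lev y := by omega
  have hpz : p ≤ c.lev z := by omega
  have key : setDist (c.Kv (c.anc x j)) (c.Kv (c.anc y j)) ≤ c.β * c.r ^ j := by
    have h1 : setDist (c.Kv (c.anc x j)) (c.Kv (c.anc y j))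
        ≤ setDist (c.Kv (c.anc x p)) (c.Kv (c.anc y p)) :=
      setDist_anti (c.Kv_nonempty _) (c.Kv_nonempty _)
        (c.Kv_anc_subset (by omega) hpx) (c.Kv_anc_subset (by omega) hpy)
    have h2 : setDist (c.Kv (c.anc x p)) (c.Kv (c.anc y p))
        ≤ setDist (c.Kv (c.anc x p)) (c.Kv (c.anc z p)) + Metric.diam (c.Kv (c.anc z p))
          + setDist (c.Kv (c.anc z p)) (c.Kv (c.anc y p)) :=
      setDist_triangle (c.Kv_nonempty _) (c.Kv_nonempty _) (c.Kv_nonempty _)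
        (c.Kv_bounded _)
    have h3 : setDist (c.Kv (c.anc x p)) (c.Kv (c.anc z p)) ≤ c.β * c.r ^ p := by
      calc setDist (c.Kv (c.anc x p)) (c.Kv (c.anc z p))
          ≤ setDist (c.Kv (c.anc x (c.hfun x z))) (c.Kv (c.anc z (c.hfun x z))) :=
            setDist_anti (c.Kv_nonempty _) (c.Kv_nonempty _)
              (c.Kv_anc_subset (by omega) (by omega))
              (c.Kv_anc_subset (by omega) (by omega))
      _ ≤ c.β * c.r ^ (c.hfun x z) := c.hfun_spec x z
      _ ≤ c.β * c.r ^ p := by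
            exact mul_le_mul_of_nonneg_left
              (pow_le_pow_of_le_one c.r_pos.le c.r_lt_one.le (by omega)) c.β_pos.le
    have h4 : setDist (c.Kv (c.anc z p)) (c.Kv (c.anc y p)) ≤ c.β * c.r ^ p := by
      calc setDist (c.Kv (c.anc z p)) (c.Kv (c.anc y p))
          ≤ setDist (c.Kv (c.anc z (c.hfun z y))) (c.Kv (c.anc y (c.hfun z y))) :=
            setDist_anti (c.Kv_nonempty _) (c.Kv_nonempty _)
              (c.Kv_anc_subset (by omega) (by omega))
              (c.Kv_anc_subset (by omega) (by omega))
      _ ≤ c.β * c.r ^ (c.hfun z y) := c.hfun_spec z y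
      _ ≤ c.β * c.r ^ p := by
            exact mul_le_mul_of_nonneg_left
              (pow_le_pow_of_le_one c.r_pos.le c.r_lt_one.le (by omega)) c.β_pos.le
    have h5 : Metric.diam (c.Kv (c.anc z p)) ≤ c.D * c.r ^ p := by
      have := c.diam_Kv_le (c.anc z p)
      rwa [c.lev_anc hpz] at this
    have h6 : c.r ^ p = c.r ^ c.s₂ * c.r ^ j := by
      rw [← pow_add]
      congr 1
      omega
    calc setDist (c.Kv (c.anc x j)) (c.Kv (c.anc y j))
        ≤ (2 * c.β + c.D) * c.r ^ p := by linarith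
    _ = ((2 * c.β + c.D) * c.r ^ c.s₂) * c.r ^ j := by rw [h6]; ring
    _ ≤ c.β * c.r ^ j := mul_le_mul_of_nonneg_right c.s₂_spec (c.rpow_pos j).le
  have := c.hfun_ge (x := x) (y := y) (j := j) (by omega) key
  omega

/-- Upper bound for the graph distance. -/
theorem dist_add_hfun_le (x y : c.X) :
    c.G.dist x y + 2 * c.hfun x y ≤ c.lev x + c.lev y + 2 * c.t := by
  have hh := c.hfun_le x y
  have hdroot : c.G.dist x y ≤ c.lev x + c.lev y := by
    have h1 := c.connected.dist_triangle (u := x) (v := c.root) (w := y)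
    have h2 : c.G.dist x c.root = c.lev x := by rw [SimpleGraph.dist_comm]; exact c.dist_root x
    have h3 := c.dist_root y
    omega
  rcases Nat.lt_or_ge (c.hfun x y) c.t with hc | hc
  · omega
  · obtain ⟨j, hjdef⟩ : ∃ j, c.hfun x y = j + c.t := ⟨c.hfun x y - c.t, by omega⟩
    have ht1 := c.t_ge_one
    have hjx : j ≤ c.lev x := by omega
    have hjy1 : j + 1 ≤ c.lev y := by
      have := c.t_ge_one
      omega
    -- the slanted (or vertical) edge
    have hadj : c.G.Adj (c.anc x j) (c.anc y (j + 1)) := by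
      apply c.adj_of_levels
      · rw [c.lev_anc hjx, c.lev_anc hjy1]
      · rw [c.lev_anc hjx]
        have h1 : setDist (c.Kv (c.anc x j)) (c.Kv (c.anc y (j+1)))
            ≤ setDist (c.Kv (c.anc x (c.hfun x y))) (c.Kv (c.anc y (c.hfun x y))) :=
          setDist_anti (c.Kv_nonempty _) (c.Kv_nonempty _)
            (c.Kv_anc_subset (by omega) (by omega))
            (c.Kv_anc_subset (by omega) (by omega))
        have h2 : setDist (c.Kv (c.anc x (c.hfun x y))) (c.Kv (c.anc y (c.hfun x y)))
            ≤ c.β * c.r ^ (c.hfun x y) := c.hfun_spec x y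
        have h3 : c.r ^ (c.hfun x y) = c.r ^ c.t * c.r ^ j := by
          rw [hjdef, pow_add]; ring
        have h4 : c.β * c.r ^ (c.hfun x y) ≤ c.κ * c.r ^ j := by
          rw [h3, ← mul_assoc]
          exact mul_le_mul_of_nonneg_right c.t_spec (c.rpow_pos j).le
        linarith
    obtain ⟨p1, hp1⟩ := c.walk_to_anc (c.lev x - j) x j hjx rfl
    obtain ⟨p2, hp2⟩ := c.walk_to_anc (c.lev y - (j+1)) y (j+1) hjy1 rfl
    have hlen := SimpleGraph.dist_le (p1.append (SimpleGraph.Walk.cons hadj p2.reverse))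
    rw [SimpleGraph.Walk.length_append, SimpleGraph.Walk.length_cons,
      SimpleGraph.Walk.length_reverse, hp1, hp2] at hlen
    omega

/-! ### The lower bound for the graph distance -/

theorem chain_setDist_seg {u v : c.X} (p : c.G.Walk u v) (a : ℕ) :
    ∀ b, a ≤ b → b ≤ p.length →
      setDist (c.Kv (p.getVert a)) (c.Kv (p.getVert b)) ≤ (c.κ + c.D) *
        ∑ i ∈ Finset.Ico a b,
          c.r ^ (min (c.lev (p.getVert i)) (c.lev (p.getVert (i+1)))) := by
  intro b
  induction b with
  | zero =>
      intro hab _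
      have ha : a = 0 := by omega
      subst ha
      obtain ⟨pt, hpt⟩ := c.Kv_nonempty (p.getVert 0)
      simp only [Finset.Ico_self, Finset.sum_empty, mul_zero]
      exact setDist_nonpos_of_mem hpt hpt
  | succ b ih =>
      intro hab hb
      rcases Nat.lt_or_ge a (b + 1) with h | h
      · have hab' : a ≤ b := by omega
        have hb' : b ≤ p.length := by omega
        have hIH := ih hab' hb'
        have htri : setDist (c.Kv (p.getVert a)) (c.Kv (p.getVert (b+1))) ≤
            setDist (c.Kv (p.getVert a)) (c.Kv (p.getVert b)) +
            Metric.diam (c.Kv (p.getVert b)) +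
            setDist (c.Kv (p.getVert b)) (c.Kv (p.getVert (b+1))) :=
          setDist_triangle (c.Kv_nonempty _) (c.Kv_nonempty _) (c.Kv_nonempty _)
            (c.Kv_bounded _)
        have hadj := p.adj_getVert_succ (show b < p.length by omega)
        have hedge := c.adj_setDist hadj
        have hdiam := c.diam_Kv_le (p.getVert b)
        have hmono : c.r ^ (c.lev (p.getVert b)) ≤
            c.r ^ (min (c.lev (p.getVert b)) (c.lev (p.getVert (b+1)))) :=
          pow_le_pow_of_le_one c.r_pos.le c.r_lt_one.le (min_le_left _ _)
        rw [Finset.sum_Ico_succ_top hab', mul_add]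
        have hD : 0 ≤ c.D := c.D_nonneg
        have hκ := c.hκ
        have hpow : (0:ℝ) ≤ c.r ^ (min (c.lev (p.getVert b)) (c.lev (p.getVert (b+1)))) :=
          (c.rpow_pos _).le
        nlinarith [mul_le_mul_of_nonneg_left hmono hD]
      · have : a = b + 1 := by omega
        subst this
        obtain ⟨pt, hpt⟩ := c.Kv_nonempty (p.getVert (b+1))
        simp only [Finset.Ico_self, Finset.sum_empty, mul_zero]
        exact setDist_nonpos_of_mem hpt hpt

theorem κ_mul_A : c.κ * c.A = c.κ + c.D := by
  rw [A, mul_div_assoc']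
  exact mul_div_cancel_left₀ _ (ne_of_gt c.hκ)

theorem fiber_card_bound {x y : c.X} (p : c.G.Walk x y) (hp : p.length = c.G.dist x y)
    {ℓ j : ℕ} (hℓ : ∀ i, i ≤ p.length → ℓ ≤ c.lev (p.getVert i)) (hℓj : ℓ ≤ j) :
    ((Finset.range p.length).filter
        (fun i => min (c.lev (p.getVert i)) (c.lev (p.getVert (i+1))) = j)).card
      ≤ 4 * (j - ℓ) + c.C₄ := by
  classical
  by_cases hne : ((Finset.range p.length).filter
      (fun i => min (c.lev (p.getVert i)) (c.lev (p.getVert (i+1))) = j)).Nonempty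
  swap
  · rw [Finset.not_nonempty_iff_eq_empty] at hne
    rw [hne]
    simp
  set T := (Finset.range (p.length + 1)).filter (fun i => c.lev (p.getVert i) ≤ j) with hT
  have hTne : T.Nonempty := by
    obtain ⟨i, hi⟩ := hne
    rw [Finset.mem_filter, Finset.mem_range] at hi
    obtain ⟨hik, hmi⟩ := hi
    rcases min_cases (c.lev (p.getVert i)) (c.lev (p.getVert (i+1))) with ⟨h1, -⟩ | ⟨h1, -⟩
    · exact ⟨i, by rw [hT, Finset.mem_filter, Finset.mem_range]; omega⟩
    · exact ⟨i + 1, by rw [hT, Finset.mem_filter, Finset.mem_range]; omega⟩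
  set a := T.min' hTne with ha
  set b := T.max' hTne with hb
  have haT : a ∈ T := T.min'_mem hTne
  have hbT : b ∈ T := T.max'_mem hTne
  obtain ⟨ham, haj⟩ := Finset.mem_filter.mp haT
  obtain ⟨hbm, hbj⟩ := Finset.mem_filter.mp hbT
  rw [Finset.mem_range] at ham hbm
  have hab : a ≤ b := T.min'_le b hbT
  have hak : a ≤ p.length := by omega
  have hbk : b ≤ p.length := by omega
  -- the filter is contained in Icc (a-1) b
  have hsub : ((Finset.range p.length).filter
      (fun i => min (c.lev (p.getVert i)) (c.lev (p.getVert (i+1))) = j))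
      ⊆ Finset.Icc (a - 1) b := by
    intro i hi
    rw [Finset.mem_filter, Finset.mem_range] at hi
    obtain ⟨hik, hmi⟩ := hi
    rw [Finset.mem_Icc]
    rcases min_cases (c.lev (p.getVert i)) (c.lev (p.getVert (i+1))) with ⟨h1, -⟩ | ⟨h1, -⟩
    · have hiT : i ∈ T := by rw [hT, Finset.mem_filter, Finset.mem_range]; omega
      have h2 := T.min'_le i hiT
      have h3 := T.le_max' i hiT
      omega
    · have hiT : i + 1 ∈ T := by rw [hT, Finset.mem_filter, Finset.mem_range]; omega
      have h2 := T.min'_le (i+1) hiT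
      have h3 := T.le_max' (i+1) hiT
      omega
  have hcard : ((Finset.range p.length).filter
      (fun i => min (c.lev (p.getVert i)) (c.lev (p.getVert (i+1))) = j)).card
      ≤ b - a + 2 := by
    have := Finset.card_le_card hsub
    rw [Nat.card_Icc] at this
    omega
  -- the scale s
  have hQ : ∃ s : ℕ, 1 ≤ s ∧ c.A * ((b - a : ℕ) : ℝ) ≤ c.q ^ s := by
    obtain ⟨s', hs'⟩ := pow_unbounded_of_one_lt (c.A * ((b - a : ℕ) : ℝ)) c.q_gt_one
    exact ⟨s' + 1, by omega,
      le_trans hs'.le (pow_le_pow_right₀ c.q_gt_one.le (by omega))⟩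
  set s := Nat.find hQ with hs
  have hs1 : 1 ≤ s := (Nat.find_spec hQ).1
  have hsA : c.A * ((b - a : ℕ) : ℝ) ≤ c.q ^ s := (Nat.find_spec hQ).2
  -- shortcut: d(g a, g b) ≤ 2(j - ℓ) + 2 s
  have hdistab : b - a ≤ c.G.dist (p.getVert a) (p.getVert b) :=
    c.geodesic_dist_getVert p hp hab hbk
  have hlga : ℓ ≤ c.lev (p.getVert a) := hℓ a hak
  have hlgb : ℓ ≤ c.lev (p.getVert b) := hℓ b hbk
  have hshort : c.G.dist (p.getVert a) (p.getVert b) ≤ 2 * (j - ℓ) + 2 * s := by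
    rcases Nat.lt_or_ge ℓ s with hls | hls
    · -- route through the root
      have h1 := c.connected.dist_triangle (u := p.getVert a) (v := c.root) (w := p.getVert b)
      have h2 : c.G.dist (p.getVert a) c.root = c.lev (p.getVert a) := by
        rw [SimpleGraph.dist_comm]; exact c.dist_root _
      have h3 := c.dist_root (p.getVert b)
      omega
    · -- route through ancestors at level ℓ - s
      have hchain := c.chain_setDist_seg p a b hab hbk
      have hsum : ∑ i ∈ Finset.Ico a b,
          c.r ^ (min (c.lev (p.getVert i)) (c.lev (p.getVert (i+1))))
          ≤ ((b - a : ℕ) : ℝ) * c.r ^ ℓ := by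
        have hcard' : (Finset.Ico a b).card = b - a := Nat.card_Ico a b
        calc ∑ i ∈ Finset.Ico a b,
            c.r ^ (min (c.lev (p.getVert i)) (c.lev (p.getVert (i+1))))
            ≤ ∑ _i ∈ Finset.Ico a b, c.r ^ ℓ := by
              refine Finset.sum_le_sum fun i hi => ?_
              rw [Finset.mem_Ico] at hi
              refine pow_le_pow_of_le_one c.r_pos.le c.r_lt_one.le ?_
              have h4 := hℓ i (by omega)
              have h5 := hℓ (i+1) (by omega)
              omega
        _ = ((b - a : ℕ) : ℝ) * c.r ^ ℓ := by
              rw [Finset.sum_const, hcard', nsmul_eq_mul]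
      have hsd : setDist (c.Kv (p.getVert a)) (c.Kv (p.getVert b))
          ≤ (c.κ + c.D) * (((b - a : ℕ) : ℝ) * c.r ^ ℓ) := by
        refine le_trans hchain ?_
        exact mul_le_mul_of_nonneg_left hsum (by linarith [c.hκ, c.D_nonneg])
      -- the key estimate
      have hkey : (c.κ + c.D) * (((b - a : ℕ) : ℝ) * c.r ^ ℓ) ≤ c.κ * c.r ^ (ℓ - s) := by
        have h6 : (c.κ + c.D) * ((b - a : ℕ) : ℝ) ≤ c.κ * c.q ^ s := by
          calc (c.κ + c.D) * ((b - a : ℕ) : ℝ) = c.κ * (c.A * ((b - a : ℕ) : ℝ)) := by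
                rw [← mul_assoc, c.κ_mul_A]
          _ ≤ c.κ * c.q ^ s := mul_le_mul_of_nonneg_left hsA c.hκ.le
        have h7 : c.q ^ s * c.r ^ ℓ = c.r ^ (ℓ - s) := by
          have hℓeq : ℓ - s + s = ℓ := by omega
          calc c.q ^ s * c.r ^ ℓ = c.q ^ s * (c.r ^ (ℓ - s) * c.r ^ s) := by
                rw [← pow_add, hℓeq]
          _ = c.r ^ (ℓ - s) * (c.r ^ s * c.q ^ s) := by ring
          _ = c.r ^ (ℓ - s) := by rw [c.rpow_mul_qpow, mul_one]
        calc (c.κ + c.D) * (((b - a : ℕ) : ℝ) * c.r ^ ℓ)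
            = ((c.κ + c.D) * ((b - a : ℕ) : ℝ)) * c.r ^ ℓ := by ring
        _ ≤ (c.κ * c.q ^ s) * c.r ^ ℓ :=
            mul_le_mul_of_nonneg_right h6 (c.rpow_pos ℓ).le
        _ = c.κ * (c.q ^ s * c.r ^ ℓ) := by ring
        _ = c.κ * c.r ^ (ℓ - s) := by rw [h7]
      have hls' : ℓ - s ≤ c.lev (p.getVert a) := by omega
      have hls1 : ℓ - s + 1 ≤ c.lev (p.getVert b) := by omega
      have hadj : c.G.Adj (c.anc (p.getVert a) (ℓ - s)) (c.anc (p.getVert b) (ℓ - s + 1)) := by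
        apply c.adj_of_levels
        · rw [c.lev_anc hls', c.lev_anc hls1]
        · rw [c.lev_anc hls']
          have hanti : setDist (c.Kv (c.anc (p.getVert a) (ℓ - s)))
              (c.Kv (c.anc (p.getVert b) (ℓ - s + 1)))
              ≤ setDist (c.Kv (p.getVert a)) (c.Kv (p.getVert b)) :=
            setDist_anti (c.Kv_nonempty _) (c.Kv_nonempty _)
              (c.Kv_subset_anc hls') (c.Kv_subset_anc hls1)
          linarith
      obtain ⟨w1, hw1⟩ := c.walk_to_anc (c.lev (p.getVert a) - (ℓ - s)) (p.getVert a)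
        (ℓ - s) hls' rfl
      obtain ⟨w2, hw2⟩ := c.walk_to_anc (c.lev (p.getVert b) - (ℓ - s + 1)) (p.getVert b)
        (ℓ - s + 1) hls1 rfl
      have hlen := SimpleGraph.dist_le (w1.append (SimpleGraph.Walk.cons hadj w2.reverse))
      rw [SimpleGraph.Walk.length_append, SimpleGraph.Walk.length_cons,
        SimpleGraph.Walk.length_reverse, hw1, hw2] at hlen
      omega
  have hba : b - a ≤ 2 * (j - ℓ) + 2 * s := by omega
  -- bound on s
  have hsbound : s ≤ (j - ℓ) + c.s₁ + 1 := by
    rcases Nat.lt_or_ge s 2 with h2 | h2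
    · omega
    · have hmin : ¬(1 ≤ s - 1 ∧ c.A * ((b - a : ℕ) : ℝ) ≤ c.q ^ (s - 1)) :=
        Nat.find_min hQ (by omega)
      have hq1 : c.q ^ (s - 1) < c.A * ((b - a : ℕ) : ℝ) := by
        by_contra hcon
        exact hmin ⟨by omega, le_of_not_gt hcon⟩
      by_contra hcon
      push_neg at hcon
      have hjs : j - ℓ ≤ s - 2 := by omega
      have hquad := c.quad_le_pow (s - 1)
      have hba' : ((b - a : ℕ) : ℝ) ≤ 4 * ((s : ℝ) - 1) := by
        have h8 : (b - a : ℕ) ≤ 4 * (s - 1) := by omega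
        have h9 : ((b - a : ℕ) : ℝ) ≤ ((4 * (s - 1) : ℕ) : ℝ) := by exact_mod_cast h8
        refine le_trans h9 ?_
        push_cast
        have : (1:ℝ) ≤ (s:ℝ) := by exact_mod_cast hs1
        rw [Nat.cast_sub (by omega)]
        push_cast
        linarith
      have hz : (0:ℝ) < ((s - 1 : ℕ) : ℝ) := by
        have : 1 ≤ s - 1 := by omega
        exact_mod_cast Nat.lt_of_lt_of_le Nat.zero_lt_one this
      have hcast : ((s - 1 : ℕ) : ℝ) = (s : ℝ) - 1 := by
        rw [Nat.cast_sub (by omega)]; push_cast; ring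
      -- c₀ z² ≤ q^{s-1} < A (b-a) ≤ 4A z  with z = s-1
      have hchain2 : c.c₀ * ((s - 1 : ℕ) : ℝ) ^ 2 < 4 * c.A * ((s - 1 : ℕ) : ℝ) := by
        calc c.c₀ * ((s - 1 : ℕ) : ℝ) ^ 2 ≤ c.q ^ (s - 1) := hquad
        _ < c.A * ((b - a : ℕ) : ℝ) := hq1
        _ ≤ c.A * (4 * ((s : ℝ) - 1)) := mul_le_mul_of_nonneg_left hba' c.A_pos.le
        _ = 4 * c.A * ((s - 1 : ℕ) : ℝ) := by rw [hcast]; ring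
      have hz2 : c.c₀ * ((s - 1 : ℕ) : ℝ) < 4 * c.A := by
        have := hchain2
        rw [sq] at this
        rw [← mul_assoc] at this
        exact lt_of_mul_lt_mul_right this hz.le
      have hs₁ : (8 * c.A / c.c₀ : ℝ) ≤ (c.s₁ : ℝ) := Nat.le_ceil _
      have hzbound : ((s - 1 : ℕ) : ℝ) < (c.s₁ : ℝ) := by
        have h10 : ((s - 1 : ℕ) : ℝ) < 4 * c.A / c.c₀ :=
          (lt_div_iff₀ c.c₀_pos).mpr (by linarith)
        have h11 : (4 * c.A / c.c₀ : ℝ) ≤ 8 * c.A / c.c₀ := by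
          have hc := c.c₀_pos
          rw [div_le_div_iff₀ hc hc]
          nlinarith [c.A_pos]
        linarith
      have : s - 1 < c.s₁ := by exact_mod_cast hzbound
      omega
  have hC₄ : c.C₄ = 2 * c.s₁ + 4 := rfl
  omega

theorem partial_series_bound (n : ℕ) :
    ∑ i ∈ Finset.range n, ((4 * i + c.C₄ : ℕ) : ℝ) * c.r ^ i ≤ c.C₅ := by
  have habs : ‖c.r‖ < 1 := by
    rw [Real.norm_eq_abs, abs_of_pos c.r_pos]
    exact c.r_lt_one
  have h1 : HasSum (fun i : ℕ => 4 * ((i : ℝ) * c.r ^ i) + (c.C₄ : ℝ) * c.r ^ i)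
      (4 * (c.r / (1 - c.r) ^ 2) + (c.C₄ : ℝ) * (1 - c.r)⁻¹) :=
    ((hasSum_coe_mul_geometric_of_norm_lt_one habs).mul_left 4).add
      ((hasSum_geometric_of_lt_one c.r_pos.le c.r_lt_one).mul_left _)
  have h2 := sum_le_hasSum (Finset.range n)
    (fun i _ => by have hr := c.r_pos.le; positivity) h1
  calc ∑ i ∈ Finset.range n, ((4 * i + c.C₄ : ℕ) : ℝ) * c.r ^ i
      = ∑ i ∈ Finset.range n, (4 * ((i : ℝ) * c.r ^ i) + (c.C₄ : ℝ) * c.r ^ i) := by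
        refine Finset.sum_congr rfl fun i _ => ?_
        push_cast
        ring
  _ ≤ 4 * (c.r / (1 - c.r) ^ 2) + (c.C₄ : ℝ) * (1 - c.r)⁻¹ := h2
  _ = c.C₅ := rfl

theorem geodesic_sum_bound {x y : c.X} (p : c.G.Walk x y) (hp : p.length = c.G.dist x y)
    {ℓ : ℕ} (hℓ : ∀ i, i ≤ p.length → ℓ ≤ c.lev (p.getVert i)) :
    ∑ i ∈ Finset.range p.length,
        c.r ^ (min (c.lev (p.getVert i)) (c.lev (p.getVert (i+1))))
      ≤ c.C₅ * c.r ^ ℓ := by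
  classical
  set m : ℕ → ℕ := fun i => min (c.lev (p.getVert i)) (c.lev (p.getVert (i+1))) with hm
  set M := c.lev x + p.length with hM
  have hmap : ∀ i ∈ Finset.range p.length, m i ∈ Finset.range (M + 1) := by
    intro i hi
    rw [Finset.mem_range] at hi ⊢
    have h1 := (c.lev_getVert_bound p (Nat.zero_le i) (by omega)).2
    rw [p.getVert_zero] at h1
    have h2 : m i ≤ c.lev (p.getVert i) := min_le_left _ _
    omega
  have hfib := Finset.sum_fiberwise_of_maps_to hmap (fun i => c.r ^ (m i))
  have hmain : ∑ i ∈ Finset.range p.length, c.r ^ (m i) ≤ c.C₅ * c.r ^ ℓ := by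
    rw [← hfib]
    have hinner : ∀ j, ∑ i ∈ (Finset.range p.length).filter (fun i => m i = j),
        c.r ^ (m i) = (((Finset.range p.length).filter (fun i => m i = j)).card : ℝ)
          * c.r ^ j := by
      intro j
      rw [Finset.sum_congr rfl (fun i hi => by rw [(Finset.mem_filter.mp hi).2]),
        Finset.sum_const, nsmul_eq_mul]
    have hℓM : ℓ ≤ M := by
      have := hℓ 0 (Nat.zero_le _)
      rw [p.getVert_zero] at this
      omega
    have hsplit : Finset.range (M + 1) = Finset.Ico 0 (M + 1) := by
      rw [Finset.range_eq_Ico]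
    rw [hsplit, ← Finset.sum_Ico_consecutive _ (Nat.zero_le ℓ) (by omega : ℓ ≤ M + 1)]
    have hzero : ∑ j ∈ Finset.Ico 0 ℓ, ∑ i ∈ (Finset.range p.length).filter
        (fun i => m i = j), c.r ^ (m i) = 0 := by
      refine Finset.sum_eq_zero fun j hj => ?_
      rw [Finset.mem_Ico] at hj
      have hempty : (Finset.range p.length).filter (fun i => m i = j) = ∅ := by
        rw [Finset.filter_eq_empty_iff]
        intro i hi
        rw [Finset.mem_range] at hi
        have h1 := hℓ i (by omega)
        have h2 := hℓ (i+1) (by omega)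
        have h3 : ℓ ≤ m i := le_min h1 h2
        omega
      rw [hempty, Finset.sum_empty]
    rw [hzero, zero_add]
    have hbound : ∑ j ∈ Finset.Ico ℓ (M + 1), ∑ i ∈ (Finset.range p.length).filter
        (fun i => m i = j), c.r ^ (m i)
        ≤ ∑ j ∈ Finset.Ico ℓ (M + 1), ((4 * (j - ℓ) + c.C₄ : ℕ) : ℝ) * c.r ^ j := by
      refine Finset.sum_le_sum fun j hj => ?_
      rw [Finset.mem_Ico] at hj
      rw [hinner j]
      refine mul_le_mul_of_nonneg_right ?_ (c.rpow_pos j).le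
      exact_mod_cast c.fiber_card_bound p hp hℓ hj.1
    refine le_trans hbound ?_
    rw [Finset.sum_Ico_eq_sum_range]
    have hterm : ∀ i, ((4 * ((ℓ + i) - ℓ) + c.C₄ : ℕ) : ℝ) * c.r ^ (ℓ + i)
        = (((4 * i + c.C₄ : ℕ) : ℝ) * c.r ^ i) * c.r ^ ℓ := by
      intro i
      have h4 : (ℓ + i) - ℓ = i := by omega
      rw [h4, pow_add]
      ring
    rw [Finset.sum_congr rfl (fun i _ => hterm i), ← Finset.sum_mul]
    exact mul_le_mul_of_nonneg_right (c.partial_series_bound _) (c.rpow_pos ℓ).le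
  exact hmain

/-- Lower bound for the graph distance. -/
theorem levs_le_dist (x y : c.X) :
    c.lev x + c.lev y ≤ c.G.dist x y + 2 * c.hfun x y := by
  obtain ⟨p, hp⟩ := (c.connected.preconnected x y).exists_walk_length_eq_dist
  have hne : (Finset.range (p.length + 1)).Nonempty := ⟨0, by simp⟩
  set ℓ := (Finset.range (p.length + 1)).inf' hne (fun i => c.lev (p.getVert i)) with hℓdef
  have hℓ : ∀ i, i ≤ p.length → ℓ ≤ c.lev (p.getVert i) := by
    intro i hi
    exact Finset.inf'_le _ (by rw [Finset.mem_range]; omega)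
  obtain ⟨i₀, hi₀mem, hi₀⟩ := Finset.exists_mem_eq_inf' hne (fun i => c.lev (p.getVert i))
  rw [Finset.mem_range] at hi₀mem
  have hi₀k : i₀ ≤ p.length := by omega
  have hℓx : ℓ ≤ c.lev x := by
    have := hℓ 0 (Nat.zero_le _)
    rwa [p.getVert_zero] at this
  have hℓy : ℓ ≤ c.lev y := by
    have := hℓ p.length le_rfl
    rwa [p.getVert_length] at this
  -- lower bound on the length
  have h1 : c.lev x ≤ ℓ + i₀ := by
    have := (c.lev_getVert_bound p (Nat.zero_le i₀) hi₀k).1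
    rw [p.getVert_zero, ← hi₀] at this
    omega
  have h2 : c.lev y ≤ ℓ + (p.length - i₀) := by
    have := (c.lev_getVert_bound p hi₀k le_rfl).2
    rw [p.getVert_length, ← hi₀] at this
    omega
  -- ℓ is at most the confluence level
  have hsum := c.geodesic_sum_bound p hp hℓ
  have hchain := c.chain_setDist_seg p 0 p.length (Nat.zero_le _) le_rfl
  rw [p.getVert_zero, p.getVert_length, ← Finset.range_eq_Ico] at hchain
  have hκD : (0:ℝ) ≤ c.κ + c.D := by linarith [c.hκ, c.D_nonneg]
  have hd : setDist (c.Kv (c.anc x ℓ)) (c.Kv (c.anc y ℓ)) ≤ c.β * c.r ^ ℓ := by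
    have hanti : setDist (c.Kv (c.anc x ℓ)) (c.Kv (c.anc y ℓ))
        ≤ setDist (c.Kv x) (c.Kv y) :=
      setDist_anti (c.Kv_nonempty _) (c.Kv_nonempty _)
        (c.Kv_subset_anc hℓx) (c.Kv_subset_anc hℓy)
    have hstep : setDist (c.Kv x) (c.Kv y) ≤ (c.κ + c.D) * (c.C₅ * c.r ^ ℓ) :=
      le_trans hchain (mul_le_mul_of_nonneg_left hsum hκD)
    have hβ : (c.κ + c.D) * (c.C₅ * c.r ^ ℓ) ≤ c.β * c.r ^ ℓ := by
      rw [← mul_assoc]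
      exact mul_le_mul_of_nonneg_right c.κD_C₅_le_β (c.rpow_pos ℓ).le
    linarith
  have hfin : ℓ ≤ c.hfun x y := c.hfun_ge (le_min hℓx hℓy) hd
  have hplen : p.length = c.G.dist x y := hp
  omega

/-! ### Conclusion -/

theorem gprod_eq (x y : c.X) : gprod c.G c.root x y
    = ((c.lev x : ℝ) + (c.lev y : ℝ) - (c.G.dist x y : ℝ)) / 2 := by
  rw [gprod, c.dist_root, c.dist_root]

theorem gprod_le_hfun (x y : c.X) : gprod c.G c.root x y ≤ (c.hfun x y : ℝ) := by
  have h := c.levs_le_dist x y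
  have h' : ((c.lev x : ℝ) + (c.lev y : ℝ)) ≤ (c.G.dist x y : ℝ) + 2 * (c.hfun x y : ℝ) := by
    exact_mod_cast h
  rw [c.gprod_eq]
  linarith

theorem hfun_sub_le_gprod (x y : c.X) :
    (c.hfun x y : ℝ) - (c.t : ℝ) ≤ gprod c.G c.root x y := by
  have h := c.dist_add_hfun_le x y
  have h' : (c.G.dist x y : ℝ) + 2 * (c.hfun x y : ℝ)
      ≤ (c.lev x : ℝ) + (c.lev y : ℝ) + 2 * (c.t : ℝ) := by
    exact_mod_cast h
  rw [c.gprod_eq]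
  linarith

theorem hyperbolic : GromovHyperbolic c.G c.root := by
  refine ⟨(c.s₂ : ℝ) + (c.t : ℝ), by positivity, ?_⟩
  intro x y z
  have h1 := c.gprod_le_hfun x z
  have h2 := c.gprod_le_hfun z y
  have h3 := c.hfun_sub_le_gprod x y
  have h4 := c.hfun_ultra x y z
  have h4' : ((min (c.hfun x z) (c.hfun z y) : ℕ) : ℝ) ≤ (c.hfun x y : ℝ) + (c.s₂ : ℝ) := by
    exact_mod_cast h4
  have h5 : min (gprod c.G c.root x z) (gprod c.G c.root z y)
      ≤ ((min (c.hfun x z) (c.hfun z y) : ℕ) : ℝ) := by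
    rw [Nat.cast_min]
    exact min_le_min h1 h2
  linarith

end Ctx
/-- Theorem 6.2 (first part): the graph `(X, 𝓔_v ∪ 𝓔_s)` with slanted edges of
an IFS of contractive similitudes is Gromov hyperbolic. -/
theorem slanted_graph_hyperbolic {d N : ℕ} (hN : 2 ≤ N)
    (S : Fin N → Euc d → Euc d) (ρ : Fin N → ℝ) (r κ : ℝ) (K : Set (Euc d))
    (hρ0 : ∀ j, 0 < ρ j) (hρ1 : ∀ j, ρ j < 1)
    (hsim : ∀ j a b, dist (S j a) (S j b) = ρ j * dist a b)
    (hr : IsLeast (Set.range ρ) r) (hκ : 0 < κ)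
    (hKc : IsCompact K) (hKne : K.Nonempty) (hKinv : K = ⋃ j, S j '' K) :
    GromovHyperbolic (slantV S ρ r κ K)
      ⟨([] : List (Fin N)), 0, by simp [Jlevel]⟩ := by
  exact Ctx.hyperbolic ⟨S, ρ, r, κ, K, hρ0, hρ1, hsim, hr, hκ, hKc, hKne, hKinv⟩

end HypIFS
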